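/- Comparison principle for Jacobi-type equations: let J : [0, ∞) → E be a C² curve in a finite-dimensional real inner product space E satisfying ‖J''(t)‖ ≤ k·(t+1)^(−3)·‖J(t)‖ for all t ≥ 0, and let y : [0, ∞) → ℝ be a solution of y''(t) = k·(t+1)^(−3)·y(t) with ‖J(0)‖ ≤ y(0) and ‖J'(0)‖ ≤ y'(0). Then ‖J(t)‖ ≤ y(t) for all t ≥ 0. -/

import Mathlib

open MeasureTheory intervalIntegral Set Real

set_option maxHeartbeats 1000000 in
/-- Comparison principle for Jacobi-type equations. -/
theorem stmt2 {E : Type*} [NormedAddCommGroup E] [InnerProductSpace ℝ E]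
    [FiniteDimensional ℝ E]
    (k : ℝ) (hk : 0 < k) (J J' : ℝ → E) (y y' : ℝ → ℝ)
    (hJ1 : ∀ t ≥ (0:ℝ), HasDerivAt J (J' t) t)
    (hJ2 : ∀ t ≥ (0:ℝ), DifferentiableAt ℝ J' t)
    (hJ'cont : Continuous J')
    (hJbound : ∀ t ≥ (0:ℝ), ‖deriv J' t‖ ≤ k / (t + 1) ^ 3 * ‖J t‖)
    (hy1 : ∀ t ≥ (0:ℝ), HasDerivAt y (y' t) t)
    (hy2 : ∀ t ≥ (0:ℝ), HasDerivAt y' (k / (t + 1) ^ 3 * y t) t)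
    (hypos : ∀ t ≥ (0:ℝ), 0 < y t)
    (h0 : ‖J 0‖ ≤ y 0) (h0' : ‖J' 0‖ ≤ y' 0) :
    ∀ t ≥ (0:ℝ), ‖J t‖ ≤ y t := by
  borelize E
  intro T hT
  -- continuity on [0, ∞)
  have hJc : ContinuousOn J (Set.Ici 0) := fun s hs => ((hJ1 s hs).continuousAt).continuousWithinAt
  have hyc : ContinuousOn y (Set.Ici 0) := fun s hs => ((hy1 s hs).continuousAt).continuousWithinAt
  have hy'c : ContinuousOn y' (Set.Ici 0) :=
    fun s hs => ((hy2 s hs).continuousAt).continuousWithinAt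
  set m : ℝ → ℝ := fun s => max s 0 with hmdef
  have hmc : Continuous m := continuous_id.max continuous_const
  have hm0 : ∀ s : ℝ, m s ∈ Set.Ici (0:ℝ) := fun s => le_max_right s 0
  have hmeq : ∀ s : ℝ, 0 ≤ s → m s = s := fun s hs => max_eq_left hs
  set p : ℝ → ℝ := fun t => max 0 (‖J (m t)‖ - y (m t)) with hpdef
  set q : ℝ → ℝ := fun t => max 0 (‖J' t‖ - y' (m t)) with hqdef
  set u : ℝ → ℝ := fun t => p t + q t with hudef
  have hpc : Continuous p := continuous_const.max
    (((hJc.comp_continuous hmc hm0).norm).sub (hyc.comp_continuous hmc hm0))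
  have hqc : Continuous q := continuous_const.max
    (hJ'cont.norm.sub (hy'c.comp_continuous hmc hm0))
  have huc : Continuous u := hpc.add hqc
  have hp0 : ∀ t, 0 ≤ p t := fun t => le_max_left _ _
  have hq0 : ∀ t, 0 ≤ q t := fun t => le_max_left _ _
  have hu0 : ∀ t, 0 ≤ u t := fun t => add_nonneg (hp0 t) (hq0 t)
  set v : ℝ → ℝ := fun x => ∫ s in (0:ℝ)..x, u s with hvdef
  have hui : ∀ a b : ℝ, IntervalIntegrable u volume a b := fun a b => huc.intervalIntegrable a b
  have hv : ∀ x : ℝ, HasDerivAt v (u x) x := fun x =>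
    intervalIntegral.integral_hasDerivAt_right (hui 0 x)
      (huc.stronglyMeasurableAtFilter _ _) huc.continuousAt
  have hvnn : ∀ x : ℝ, 0 ≤ x → 0 ≤ v x := fun x hx =>
    intervalIntegral.integral_nonneg hx (fun s _ => hu0 s)
  -- the key differential inequality
  have key : ∀ t : ℝ, 0 ≤ t → u t ≤ (1 + k) * v t := by
    intro t ht
    have huIcc : Set.uIcc (0:ℝ) t = Set.Icc 0 t := Set.uIcc_of_le ht
    have hsub : Set.Icc (0:ℝ) t ⊆ Set.Ici 0 := fun s hs => hs.1
    -- FTC for J and y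
    have hJ'i : IntervalIntegrable J' volume 0 t := hJ'cont.intervalIntegrable 0 t
    have ftcJ : ∫ s in (0:ℝ)..t, J' s = J t - J 0 :=
      intervalIntegral.integral_eq_sub_of_hasDerivAt
        (fun s hs => hJ1 s (by rw [huIcc] at hs; exact hs.1)) hJ'i
    have hy'i : IntervalIntegrable y' volume 0 t := by
      apply ContinuousOn.intervalIntegrable
      rw [huIcc]; exact hy'c.mono hsub
    have ftcy : ∫ s in (0:ℝ)..t, y' s = y t - y 0 :=
      intervalIntegral.integral_eq_sub_of_hasDerivAt
        (fun s hs => hy1 s (by rw [huIcc] at hs; exact hs.1)) hy'i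
    -- step 1 : ‖J t‖ - y t ≤ v t
    have hstep1 : ‖J t‖ - y t ≤ v t := by
      have h1 : ‖J t‖ - ‖J 0‖ ≤ ‖∫ s in (0:ℝ)..t, J' s‖ := by
        rw [ftcJ]; exact norm_sub_norm_le _ _
      have h2 : ‖∫ s in (0:ℝ)..t, J' s‖ ≤ ∫ s in (0:ℝ)..t, ‖J' s‖ :=
        intervalIntegral.norm_integral_le_integral_norm ht
      have h3 : (∫ s in (0:ℝ)..t, (‖J' s‖ - y' s)) ≤ v t := by
        apply intervalIntegral.integral_mono_on ht
          ((hJ'cont.norm.intervalIntegrable 0 t).sub hy'i) (hui 0 t)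
        intro s hs
        have hqs : ‖J' s‖ - y' s ≤ q s := by
          rw [hqdef]; simp only [hmeq s hs.1]; exact le_max_right _ _
        have := hp0 s
        simp only [hudef]; linarith
      have h4 : (∫ s in (0:ℝ)..t, (‖J' s‖ - y' s))
          = (∫ s in (0:ℝ)..t, ‖J' s‖) - ∫ s in (0:ℝ)..t, y' s :=
        intervalIntegral.integral_sub (hJ'cont.norm.intervalIntegrable 0 t) hy'i
      have h5 : y t - y 0 = ∫ s in (0:ℝ)..t, y' s := ftcy.symm
      linarith
    -- step 2 : ‖J' t‖ - y' t ≤ k * v t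
    have hstep2 : ‖J' t‖ - y' t ≤ k * v t := by
      -- integrability of deriv J'
      have hbndc : Continuous (fun s => k * ‖J (m s)‖) :=
        continuous_const.mul (hJc.comp_continuous hmc hm0).norm
      have hdm : AEStronglyMeasurable (deriv J') (volume.restrict (Set.uIoc (0:ℝ) t)) :=
        (measurable_deriv J').aestronglyMeasurable.restrict
      have hdi : IntervalIntegrable (deriv J') volume 0 t := by
        apply (hbndc.intervalIntegrable 0 t).mono_fun hdm
        rw [Set.uIoc_of_le ht]
        refine (ae_restrict_iff' measurableSet_Ioc).2 (Filter.Eventually.of_forall ?_)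
        intro s hs
        have hs0 : (0:ℝ) ≤ s := le_of_lt hs.1
        have hb := hJbound s hs0
        have hpow : (1:ℝ) ≤ (s+1)^3 := one_le_pow₀ (by linarith)
        have hgk : k / (s+1)^3 ≤ k := by
          rw [div_le_iff₀ (by linarith)]
          nlinarith
        have : ‖deriv J' s‖ ≤ k * ‖J s‖ := by
          calc ‖deriv J' s‖ ≤ k / (s+1)^3 * ‖J s‖ := hb
            _ ≤ k * ‖J s‖ := by
              apply mul_le_mul_of_nonneg_right hgk (norm_nonneg _)
        show ‖deriv J' s‖ ≤ ‖k * ‖J (m s)‖‖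
        rw [hmeq s hs0]
        calc ‖deriv J' s‖ ≤ k * ‖J s‖ := this
          _ ≤ ‖k * ‖J s‖‖ := le_abs_self _
      have ftcJ' : ∫ s in (0:ℝ)..t, deriv J' s = J' t - J' 0 :=
        intervalIntegral.integral_eq_sub_of_hasDerivAt
          (fun s hs => ((hJ2 s (by rw [huIcc] at hs; exact hs.1)).hasDerivAt)) hdi
      have hgyc : ContinuousOn (fun s => k / (s+1)^3 * y s) (Set.Icc 0 t) := by
        apply ContinuousOn.mul _ (hyc.mono hsub)
        apply ContinuousOn.div continuousOn_const
          (((continuous_id.add continuous_const).pow 3).continuousOn)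
        intro s hs
        have h9 : (0:ℝ) < s + 1 := by linarith [hs.1]
        exact (pow_pos h9 3).ne'
      have hgyi : IntervalIntegrable (fun s => k / (s+1)^3 * y s) volume 0 t := by
        apply ContinuousOn.intervalIntegrable; rw [huIcc]; exact hgyc
      have ftcy' : ∫ s in (0:ℝ)..t, k / (s+1)^3 * y s = y' t - y' 0 :=
        intervalIntegral.integral_eq_sub_of_hasDerivAt
          (fun s hs => hy2 s (by rw [huIcc] at hs; exact hs.1)) hgyi
      have h1 : ‖J' t‖ - ‖J' 0‖ ≤ ‖∫ s in (0:ℝ)..t, deriv J' s‖ := by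
        rw [ftcJ']; exact norm_sub_norm_le _ _
      have h2 : ‖∫ s in (0:ℝ)..t, deriv J' s‖ ≤ ∫ s in (0:ℝ)..t, ‖deriv J' s‖ :=
        intervalIntegral.norm_integral_le_integral_norm ht
      have h3 : (∫ s in (0:ℝ)..t, (‖deriv J' s‖ - k / (s+1)^3 * y s))
          ≤ ∫ s in (0:ℝ)..t, k * u s := by
        apply intervalIntegral.integral_mono_on ht (hdi.norm.sub hgyi)
          ((continuous_const.mul huc).intervalIntegrable 0 t)
        intro s hs
        have hs0 : (0:ℝ) ≤ s := hs.1
        have hb := hJbound s hs0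
        have hgnn : 0 ≤ k / (s+1)^3 := by positivity
        have hpow : (1:ℝ) ≤ (s+1)^3 := one_le_pow₀ (by linarith)
        have hgk : k / (s+1)^3 ≤ k := by
          rw [div_le_iff₀ (by linarith)]; nlinarith
        have hps : ‖J s‖ - y s ≤ p s := by
          rw [hpdef]; simp only [hmeq s hs0]; exact le_max_right _ _
        have h6 : k / (s+1)^3 * (‖J s‖ - y s) ≤ k / (s+1)^3 * p s :=
          mul_le_mul_of_nonneg_left hps hgnn
        have h7 : k / (s+1)^3 * p s ≤ k * p s :=
          mul_le_mul_of_nonneg_right hgk (hp0 s)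
        have h8 : k * p s ≤ k * u s := by
          have : p s ≤ u s := by simp only [hudef]; linarith [hq0 s]
          exact mul_le_mul_of_nonneg_left this (le_of_lt hk)
        have h9 : k / (s+1)^3 * (‖J s‖ - y s)
            = k / (s+1)^3 * ‖J s‖ - k / (s+1)^3 * y s := by ring
        calc ‖deriv J' s‖ - k / (s+1)^3 * y s
            ≤ k / (s+1)^3 * ‖J s‖ - k / (s+1)^3 * y s := by linarith [hb]
          _ = k / (s+1)^3 * (‖J s‖ - y s) := by ring
          _ ≤ k / (s+1)^3 * p s := h6
          _ ≤ k * p s := h7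
          _ ≤ k * u s := h8
      have h4 : (∫ s in (0:ℝ)..t, (‖deriv J' s‖ - k / (s+1)^3 * y s))
          = (∫ s in (0:ℝ)..t, ‖deriv J' s‖) - ∫ s in (0:ℝ)..t, k / (s+1)^3 * y s :=
        intervalIntegral.integral_sub hdi.norm hgyi
      have h5 : (∫ s in (0:ℝ)..t, k * u s) = k * v t := by
        rw [hvdef]; exact intervalIntegral.integral_const_mul k u
      linarith
    -- combine
    have hpt : p t ≤ v t := by
      rw [hpdef]; simp only [hmeq t ht]
      exact max_le (hvnn t ht) hstep1
    have hqt : q t ≤ k * v t := by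
      rw [hqdef]; simp only [hmeq t ht]
      exact max_le (by nlinarith [hvnn t ht]) hstep2
    simp only [hudef]; nlinarith
  -- Grönwall
  have hcont : ContinuousOn v (Set.Icc 0 T) :=
    fun x _ => ((hv x).continuousAt).continuousWithinAt
  have hvderiv : ∀ x ∈ Set.Ico (0:ℝ) T, HasDerivWithinAt v (u x) (Set.Ici x) x :=
    fun x _ => (hv x).hasDerivWithinAt
  have hbound : ∀ x ∈ Set.Ico (0:ℝ) T, ‖u x‖ ≤ (1 + k) * ‖v x‖ + 0 := by
    intro x hx
    rw [Real.norm_of_nonneg (hu0 x), Real.norm_of_nonneg (hvnn x hx.1), add_zero]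
    exact key x hx.1
  have ha : ‖v 0‖ ≤ (0:ℝ) := by
    rw [hvdef]; simp [intervalIntegral.integral_same]
  have hz := norm_le_gronwallBound_of_norm_deriv_right_le hcont hvderiv ha hbound
  have hvT : v T = 0 := by
    have h := hz T (Set.mem_Icc.2 ⟨hT, le_rfl⟩)
    rw [gronwallBound_ε0_δ0] at h
    have := hvnn T hT
    have habs : |v T| ≤ 0 := h
    linarith [abs_nonneg (v T), le_abs_self (v T), neg_abs_le (v T)]
  have huT : u T ≤ 0 := by
    have := key T hT
    rw [hvT] at this; linarith
  have hpT : ‖J T‖ - y T ≤ p T := by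
    rw [hpdef]; simp only [hmeq T hT]; exact le_max_right _ _
  have : p T ≤ u T := by simp only [hudef]; linarith [hq0 T]
  linarith [hp0 T, hq0 T]
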